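/- The 2n−2 polynomials ν₂, ν₃, …, ν_{2n−1} ∈ R are algebraically independent over ℂ. -/

import Mathlib

open MvPolynomial Finset

noncomputable section

def Zv (n : ℕ) (j : Fin n) : MvPolynomial (Fin n ⊕ Fin n) ℂ := X (Sum.inl j)

def Wv (n : ℕ) (j : Fin n) : MvPolynomial (Fin n ⊕ Fin n) ℂ := X (Sum.inr j)

/-- The `k`-th normalized harmonic moment. -/
def nu (n : ℕ) [NeZero n] (k : ℕ) : MvPolynomial (Fin n ⊕ Fin n) ℂ :=
  C (Complex.I / 4) *
    ∑ j : Fin n, (Wv n j - Wv n (j + 1)) *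
      ∑ m ∈ Finset.range k, Zv n j ^ (k - 1 - m) * Zv n (j + 1) ^ m

namespace StatementThree

variable {σ : Type*} [Fintype σ] [DecidableEq σ] {N : ℕ}

omit [Fintype σ] in
lemma coeff_pderiv (i : σ) (m : σ →₀ ℕ) (P : MvPolynomial σ ℂ) :
    coeff m (pderiv i P) = (m i + 1 : ℂ) * coeff (m + Finsupp.single i 1) P := by
  induction P using MvPolynomial.induction_on' with
  | add p q hp hq => simp [hp, hq, mul_add]
  | monomial s a =>
    rw [pderiv_monomial, coeff_monomial, coeff_monomial]
    by_cases h : s = m + Finsupp.single i 1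
    · subst h
      rw [if_pos (add_tsub_cancel_right _ _), if_pos rfl]
      simp only [Finsupp.add_apply, Finsupp.single_eq_same]
      push_cast
      ring
    · rw [if_neg h, mul_zero]
      by_cases h2 : s - Finsupp.single i 1 = m
      · rw [if_pos h2]
        have hsi : s i = 0 := by
          by_contra hsi
          apply h
          rw [← h2]
          ext j
          rcases eq_or_ne i j with rfl | hj
          · simp only [Finsupp.add_apply, Finsupp.tsub_apply, Finsupp.single_eq_same]
            omega
          · simp [Finsupp.tsub_apply, Finsupp.single_apply, hj]
        simp [hsi]
      · rw [if_neg h2]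

omit [Fintype σ] in
lemma eq_zero_of_pderiv_eq_zero {P : MvPolynomial σ ℂ} (h : ∀ i, pderiv i P = 0)
    (h0 : coeff 0 P = 0) : P = 0 := by
  ext d
  rcases eq_or_ne d 0 with rfl | hd
  · simpa using h0
  · obtain ⟨i, hi⟩ : ∃ i, d i ≠ 0 := by
      by_contra hc
      push_neg at hc
      exact hd (Finsupp.ext fun j => hc j)
    have hdecomp : d = (d - Finsupp.single i 1) + Finsupp.single i 1 := by
      ext j
      rcases eq_or_ne i j with rfl | hj
      · simp only [Finsupp.add_apply, Finsupp.tsub_apply, Finsupp.single_eq_same]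
        omega
      · simp [Finsupp.tsub_apply, Finsupp.single_apply, hj]
    have hcp := coeff_pderiv i (d - Finsupp.single i 1) P
    rw [h i] at hcp
    simp only [coeff_zero] at hcp
    set m := d - Finsupp.single i 1 with hm
    have hne : ((m i : ℂ) + 1) ≠ 0 := Nat.cast_add_one_ne_zero (m i)
    have hco := (mul_eq_zero.mp hcp.symm).resolve_left hne
    rw [MvPolynomial.coeff_zero, hdecomp]
    exact hco

omit [Fintype σ] in
lemma totalDegree_pderiv_lt {P : MvPolynomial σ ℂ} (i : σ) (hP : pderiv i P ≠ 0) :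
    (pderiv i P).totalDegree < P.totalDegree := by
  have h1 : ∀ d ∈ (pderiv i P).support, (d.sum fun _ e => e) < P.totalDegree := by
    intro d hd
    rw [MvPolynomial.mem_support_iff] at hd
    rw [coeff_pderiv] at hd
    have hc : coeff (d + Finsupp.single i 1) P ≠ 0 := by
      intro h; rw [h, mul_zero] at hd; exact hd rfl
    have h2 := MvPolynomial.le_totalDegree (p := P) (MvPolynomial.mem_support_iff.mpr hc)
    have hsum : ((d + Finsupp.single i 1).sum fun _ e => e) = (d.sum fun _ e => e) + 1 := by
      rw [Finsupp.sum_add_index (by simp) (by intros; rfl)]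
      simp
    omega
  obtain ⟨d, hd⟩ := MvPolynomial.ne_zero_iff.mp hP
  rw [MvPolynomial.totalDegree]
  refine Finset.sup_lt_iff ?_ |>.mpr h1
  exact lt_of_le_of_lt (Nat.zero_le _) (h1 d (MvPolynomial.mem_support_iff.mpr hd))

lemma chainRule (f : Fin N → MvPolynomial σ ℂ) (x : σ) (P : MvPolynomial (Fin N) ℂ) :
    pderiv x (aeval f P) = ∑ i, aeval f (pderiv i P) * pderiv x (f i) := by
  induction P using MvPolynomial.induction_on with
  | C a =>
    rw [aeval_C]
    simp [Algebra.algebraMap_eq_smul_one]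
  | add p q hp hq =>
    rw [map_add, map_add, hp, hq, ← Finset.sum_add_distrib]
    refine Finset.sum_congr rfl fun i _ => ?_
    rw [map_add, map_add, add_mul]
  | mul_X p i hp =>
    rw [map_mul, aeval_X, pderiv_mul, hp, Finset.sum_mul]
    have key : ∀ j : Fin N, aeval f (pderiv j (p * X i)) * pderiv x (f j)
        = aeval f (pderiv j p) * pderiv x (f j) * f i
          + (if i = j then aeval f p * pderiv x (f i) else 0) := by
      intro j
      rw [pderiv_mul, map_add, map_mul, map_mul, aeval_X, add_mul]
      congr 1
      · ring
      · rcases eq_or_ne i j with rfl | hj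
        · rw [if_pos rfl, pderiv_X_self, map_one, mul_one]
        · rw [if_neg hj, pderiv_X_of_ne hj, map_zero, mul_zero, zero_mul]
    rw [Finset.sum_congr rfl fun j _ => key j, Finset.sum_add_distrib, Finset.sum_ite_eq]
    simp

theorem algIndep_of_det_ne_zero (f : Fin N → MvPolynomial σ ℂ) (a : σ → ℂ) (T : σ → Fin N → ℂ)
    (h : (Matrix.of fun i i' : Fin N => ∑ x : σ, eval a (pderiv x (f i)) * T x i').det ≠ 0) :
    AlgebraicIndependent ℂ f := by
  rw [algebraicIndependent_iff]
  by_contra hc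
  push_neg at hc
  obtain ⟨P₀, hP₀, hP₀0⟩ := hc
  classical
  have hQ : ∃ d : ℕ, ∃ P : MvPolynomial (Fin N) ℂ,
      aeval f P = 0 ∧ P ≠ 0 ∧ P.totalDegree = d :=
    ⟨_, P₀, hP₀, hP₀0, rfl⟩
  obtain ⟨P, hPf, hP0, hPd⟩ := Nat.find_spec hQ
  have hmin : ∀ Q : MvPolynomial (Fin N) ℂ, aeval f Q = 0 → Q ≠ 0 →
      P.totalDegree ≤ Q.totalDegree := by
    intro Q h1 h2
    rw [hPd]
    exact Nat.find_min' hQ ⟨Q, h1, h2, rfl⟩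
  set c : Fin N → MvPolynomial σ ℂ := fun i => aeval f (pderiv i P) with hcdef
  have hrel : ∀ x : σ, ∑ i, c i * pderiv x (f i) = 0 := by
    intro x
    rw [← chainRule, hPf, map_zero]
  have hcne : c ≠ 0 := by
    intro hc0
    have hall : ∀ i, pderiv i P = 0 := by
      intro i
      by_contra hne
      have h1 := totalDegree_pderiv_lt i hne
      have h2 := hmin (pderiv i P) (congrFun hc0 i) hne
      omega
    apply hP0
    have hPC : P - MvPolynomial.C (coeff 0 P) = 0 :=
      eq_zero_of_pderiv_eq_zero (fun i => by rw [map_sub, hall i, pderiv_C, sub_zero])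
        (by simp)
    have hPC' : P = MvPolynomial.C (coeff 0 P) := sub_eq_zero.mp hPC
    rw [hPC', aeval_C] at hPf
    have hz : coeff 0 P = 0 := by
      rwa [MvPolynomial.algebraMap_eq, MvPolynomial.C_eq_zero] at hPf
    rw [hPC', hz, map_zero]
  set J : Matrix (Fin N) (Fin N) (MvPolynomial σ ℂ) :=
    Matrix.of fun i i' => ∑ x : σ, pderiv x (f i) * MvPolynomial.C (T x i') with hJ
  have hvm : Matrix.vecMul c J = 0 := by
    funext i'
    simp only [Matrix.vecMul, dotProduct, hJ, Matrix.of_apply, Pi.zero_apply]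
    calc ∑ i, c i * ∑ x : σ, pderiv x (f i) * MvPolynomial.C (T x i')
        = ∑ x : σ, (∑ i, c i * pderiv x (f i)) * MvPolynomial.C (T x i') := by
          simp_rw [Finset.mul_sum]
          rw [Finset.sum_comm]
          simp_rw [Finset.sum_mul]
          exact Finset.sum_congr rfl fun x _ => Finset.sum_congr rfl fun i _ => by ring
      _ = 0 := by
          refine Finset.sum_eq_zero fun x _ => ?_
          rw [hrel, zero_mul]
  have hdet : J.det = 0 := Matrix.exists_vecMul_eq_zero_iff.mp ⟨c, hcne, hvm⟩
  apply h
  have hmap := congrArg (MvPolynomial.eval a) hdet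
  rw [RingHom.map_det (MvPolynomial.eval a) J, map_zero] at hmap
  rw [← hmap]
  congr 1
  ext i i'
  simp only [RingHom.mapMatrix_apply, Matrix.map_apply, Matrix.of_apply, hJ, map_sum, map_mul,
    eval_C]

def zc (n : ℕ) : ℂ := Complex.exp (2 * Real.pi * Complex.I / n)

variable {n : ℕ}

lemma hprim (hn : n ≠ 0) : IsPrimitiveRoot (zc n) n := Complex.isPrimitiveRoot_exp n hn

lemma zc_ne_zero (hn : n ≠ 0) : zc n ≠ 0 := by
  intro h
  have := (hprim hn).pow_eq_one (M := ℂ)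
  rw [h] at this
  simp [zero_pow hn] at this

lemma zc_zpow_eq_one_iff (hn : n ≠ 0) (s : ℤ) : zc n ^ s = 1 ↔ (n:ℤ) ∣ s :=
  (hprim hn).zpow_eq_one_iff_dvd s

lemma zc_pow_eq_one_iff (hn : n ≠ 0) (s : ℕ) : zc n ^ s = 1 ↔ n ∣ s :=
  (hprim hn).pow_eq_one_iff_dvd s

lemma zpow_congr (hn : n ≠ 0) {x y : ℤ} (h : (n:ℤ) ∣ (x - y)) : zc n ^ x = zc n ^ y := by
  have h1 : zc n ^ (x - y) = 1 := (zc_zpow_eq_one_iff hn _).mpr h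
  have := zc_ne_zero hn
  calc zc n ^ x = zc n ^ (y + (x - y)) := by congr 1; ring
    _ = zc n ^ y * zc n ^ (x - y) := zpow_add₀ this _ _
    _ = zc n ^ y := by rw [h1, mul_one]

lemma mod_dvd (hn : n ≠ 0) (m : ℕ) : (n:ℤ) ∣ (((m % n : ℕ) : ℤ) - (m : ℤ)) := by
  have h := Nat.div_add_mod m n
  refine ⟨-(m / n : ℕ), ?_⟩
  push_cast
  push_cast at h
  linarith

lemma zpow_fin_add_one [NeZero n] (j : Fin n) :
    zc n ^ ((((j + 1 : Fin n) : ℕ)) : ℤ) = zc n ^ ((j : ℕ) : ℤ) * zc n := by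
  have hn : n ≠ 0 := NeZero.ne n
  have hval : ((j + 1 : Fin n) : ℕ) = ((j : ℕ) + 1) % n := by
    rcases n with _ | m
    · exact absurd rfl hn
    · rw [Fin.val_add, Fin.val_one']
      conv_rhs => rw [Nat.add_mod]
      rw [Nat.mod_eq_of_lt j.isLt]
  rw [hval]
  rw [zpow_congr hn (mod_dvd hn ((j:ℕ)+1))]
  push_cast
  rw [zpow_add₀ (zc_ne_zero hn), zpow_one]

lemma sum_fin_zpow (hn : n ≠ 0) (s : ℤ) :
    ∑ j : Fin n, zc n ^ ((j : ℕ) * s : ℤ) = if (n:ℤ) ∣ s then (n:ℂ) else 0 := by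
  have hz0 := zc_ne_zero hn
  have hterm : ∀ j : Fin n, zc n ^ ((j : ℕ) * s : ℤ) = (zc n ^ s) ^ (j : ℕ) := by
    intro j
    rw [← zpow_natCast (zc n ^ s) (j : ℕ), ← zpow_mul]
    congr 1
    ring
  simp_rw [hterm]
  rw [Fin.sum_univ_eq_sum_range (fun j => (zc n ^ s) ^ j) n]
  split_ifs with h
  · have h1 : zc n ^ s = 1 := (zc_zpow_eq_one_iff hn s).mpr h
    simp [h1]
  · have h1 : zc n ^ s ≠ 1 := fun hc => h ((zc_zpow_eq_one_iff hn s).mp hc)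
    rw [geom_sum_eq h1]
    have h2 : (zc n ^ s) ^ n = 1 := by
      rw [← zpow_natCast (zc n ^ s) n, ← zpow_mul, mul_comm, zpow_mul,
        (zc_zpow_eq_one_iff hn n).mpr dvd_rfl, one_zpow]
    rw [h2, sub_self, zero_div]


def gs (n k : ℕ) : ℂ := ∑ m ∈ range k, zc n ^ m

def Bs (n k : ℕ) : ℂ := ∑ m ∈ range k, (m : ℂ) * zc n ^ m

def As (n k : ℕ) : ℂ := ∑ m ∈ range k, ((k : ℂ) - 1 - m) * zc n ^ m

def dl (n k : ℕ) : ℂ := Complex.I/4 * gs n k * (1 - zc n ^ (1 - (k:ℤ)))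

def gm (n k : ℕ) : ℂ :=
  Complex.I/4 * ((1 - (zc n)⁻¹) * As n k + (zc n - 1) * zc n ^ (1 - (k:ℤ)) * Bs n k)

lemma zc_ne_one (hn2 : 2 ≤ n) : zc n ≠ 1 := by
  intro h
  have hd := (zc_pow_eq_one_iff (n := n) (by omega) 1).mp (by rw [pow_one, h])
  have := Nat.le_of_dvd (by norm_num) hd
  omega

lemma zc_sub_one_ne (hn2 : 2 ≤ n) : zc n - 1 ≠ 0 :=
  sub_ne_zero.mpr (zc_ne_one hn2)

lemma As_eq (k : ℕ) : As n k = ((k:ℂ) - 1) * gs n k - Bs n k := by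
  rw [As, gs, Bs, Finset.mul_sum, ← Finset.sum_sub_distrib]
  exact Finset.sum_congr rfl fun m _ => by ring

lemma gs_mul (k : ℕ) : (zc n - 1) * gs n k = zc n ^ k - 1 := by
  rw [gs, mul_comm]
  exact geom_sum_mul (zc n) k

lemma gs_n (hn2 : 2 ≤ n) : gs n n = 0 := by
  have h := gs_mul (n := n) n
  rw [(zc_pow_eq_one_iff (by omega) n).mpr dvd_rfl, sub_self] at h
  exact (mul_eq_zero.mp h).resolve_left (zc_sub_one_ne hn2)

lemma gs_one : gs n 1 = 1 := by simp [gs]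

lemma Bs_one : Bs n 1 = 0 := by simp [Bs]

lemma gs_add (k l : ℕ) : gs n (k + l) = gs n k + zc n ^ k * gs n l := by
  rw [gs, gs, gs, Finset.sum_range_add, Finset.mul_sum]
  congr 1
  exact Finset.sum_congr rfl fun m _ => by rw [pow_add]

lemma Bs_add (k l : ℕ) :
    Bs n (k + l) = Bs n k + zc n ^ k * ((k : ℂ) * gs n l + Bs n l) := by
  rw [Bs, Bs, Finset.sum_range_add]
  congr 1
  rw [gs, Bs, mul_add, Finset.mul_sum, Finset.mul_sum, Finset.mul_sum, ← Finset.sum_add_distrib]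
  refine Finset.sum_congr rfl fun m _ => ?_
  rw [pow_add]
  push_cast
  ring

lemma Bs_mul (k : ℕ) : (zc n - 1) * Bs n k = ((k:ℂ) - 1) * zc n ^ k - gs n k + 1 := by
  induction k with
  | zero => simp [Bs, gs]
  | succ k ih =>
    rw [Bs, Finset.sum_range_succ, ← Bs] at *
    rw [gs, Finset.sum_range_succ, ← gs]
    push_cast
    ring_nf
    ring_nf at ih
    linear_combination ih

lemma Bs_n_mul (hn2 : 2 ≤ n) : (zc n - 1) * Bs n n = n := by
  rw [Bs_mul, gs_n hn2, (zc_pow_eq_one_iff (by omega) n).mpr dvd_rfl]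
  ring

lemma gs_eq_div (hn2 : 2 ≤ n) (k : ℕ) : gs n k = (zc n ^ k - 1) / (zc n - 1) := by
  rw [eq_div_iff (zc_sub_one_ne hn2), mul_comm]
  exact gs_mul k

lemma Bs_n_div (hn2 : 2 ≤ n) : Bs n n = (n : ℂ) / (zc n - 1) := by
  rw [eq_div_iff (zc_sub_one_ne hn2), mul_comm]
  exact Bs_n_mul hn2

lemma zpow_one_sub (hn : n ≠ 0) (k : ℕ) :
    zc n ^ (1 - (k:ℤ)) = zc n * (zc n ^ k)⁻¹ := by
  rw [zpow_sub₀ (zc_ne_zero hn), zpow_one, zpow_natCast, div_eq_mul_inv]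

lemma dl_add_n (hn2 : 2 ≤ n) (k : ℕ) : dl n (k + n) = dl n k := by
  have hn : n ≠ 0 := by omega
  rw [dl, dl, gs_add, gs_n hn2, mul_zero, add_zero]
  congr 2
  apply zpow_congr hn
  push_cast
  refine ⟨-1, by ring⟩

lemma dl_ne_zero (hn2 : 2 ≤ n) {k : ℕ} (hk : 1 ≤ k) (h1 : ¬ n ∣ k) (h2 : ¬ n ∣ (k - 1)) :
    dl n k ≠ 0 := by
  have hn : n ≠ 0 := by omega
  rw [dl]
  apply mul_ne_zero
  apply mul_ne_zero
  · simp [Complex.I_ne_zero]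
  · intro h
    have := gs_mul (n := n) k
    rw [h, mul_zero] at this
    have : zc n ^ k = 1 := by linear_combination -this
    exact h1 ((zc_pow_eq_one_iff hn k).mp this)
  · intro h
    have h3 : zc n ^ (1 - (k:ℤ)) = 1 := by linear_combination -h
    rw [zc_zpow_eq_one_iff hn] at h3
    apply h2
    have h4 : (n:ℤ) ∣ ((k:ℤ) - 1) := by
      have h5 := dvd_neg.mpr h3
      rwa [neg_sub] at h5
    have h5 : ((k:ℤ) - 1) = ((k - 1 : ℕ) : ℤ) := by omega
    rw [h5] at h4
    exact_mod_cast h4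
  
lemma mu_ne_zero (hn3 : 3 ≤ n) : zc n - (zc n)⁻¹ ≠ 0 := by
  have hn : n ≠ 0 := by omega
  have hz := zc_ne_zero hn
  intro h
  have heq : zc n = (zc n)⁻¹ := sub_eq_zero.mp h
  have h2 : zc n ^ (2:ℕ) = 1 := by
    rw [pow_two]
    calc zc n * zc n = zc n * (zc n)⁻¹ := by rw [← heq]
      _ = 1 := mul_inv_cancel₀ hz
  have hd := (zc_pow_eq_one_iff hn 2).mp h2
  have := Nat.le_of_dvd (by norm_num) hd
  omega

lemma gm_n (hn3 : 3 ≤ n) : gm n n = Complex.I/4 * n * (zc n - (zc n)⁻¹) := by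
  have hn : n ≠ 0 := by omega
  have hz := zc_ne_zero hn
  have hz1 := zc_sub_one_ne (by omega : 2 ≤ n)
  have hz1n : zc n ^ (1 - ((n:ℕ):ℤ)) = zc n := by
    have h := zpow_congr (n := n) hn (x := 1 - ((n:ℕ):ℤ)) (y := 1) ⟨-1, by push_cast; ring⟩
    simpa using h
  rw [gm, As_eq, gs_n (by omega : 2 ≤ n), Bs_n_div (by omega : 2 ≤ n), mul_zero, zero_sub, hz1n]
  field_simp
  ring

lemma gm_n1 (hn3 : 3 ≤ n) : gm n (n + 1) = Complex.I/4 * n * (zc n - (zc n)⁻¹) := by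
  have hn : n ≠ 0 := by omega
  have hz := zc_ne_zero hn
  have hz1 := zc_sub_one_ne (by omega : 2 ≤ n)
  have hgs : gs n (n+1) = 1 := by
    rw [show n + 1 = 1 + n by ring, gs_add, gs_n (by omega), gs_one, mul_zero, add_zero]
  have hBs : Bs n (n+1) = zc n * Bs n n := by
    rw [show n + 1 = 1 + n by ring, Bs_add, Bs_one, gs_n (by omega : 2 ≤ n)]
    push_cast
    ring
  have hzz : zc n ^ (1 - ((n + 1 : ℕ) : ℤ)) = 1 :=
    (zc_zpow_eq_one_iff hn _).mpr ⟨-1, by push_cast; ring⟩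
  rw [gm, As_eq, hgs, hBs, Bs_n_div (by omega : 2 ≤ n), hzz]
  push_cast
  field_simp
  ring

lemma gm_diff (hn3 : 3 ≤ n) (k : ℕ) :
    zc n * (gm n (k + n) - gm n k) = Complex.I/4 * n * (zc n ^ 2 - 1) := by
  have hn : n ≠ 0 := by omega
  have hz := zc_ne_zero hn
  have hzz : zc n ^ (1 - ((k + n : ℕ) : ℤ)) = zc n ^ (1 - (k:ℤ)) :=
    zpow_congr hn ⟨-1, by push_cast; ring⟩
  have hg' : (zc n - 1) * gs n k = zc n ^ k - 1 := gs_mul k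
  have hBn' : (zc n - 1) * Bs n n = (n : ℂ) := Bs_n_mul (by omega : 2 ≤ n)
  have hu' : zc n ^ (1 - (k:ℤ)) * zc n ^ k = zc n := by
    rw [← zpow_natCast (zc n) k, ← zpow_add₀ hz, show (1 - (k:ℤ)) + k = 1 by ring, zpow_one]
  have hzi' : zc n * (zc n)⁻¹ = 1 := mul_inv_cancel₀ hz
  rw [gm, gm, As_eq, As_eq, gs_add, gs_n (by omega : 2 ≤ n), mul_zero, add_zero,
    Bs_add, gs_n (by omega : 2 ≤ n), mul_zero, zero_add, hzz]
  push_cast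
  linear_combination (Complex.I/4) * ((n:ℂ) * hg' + (zc n^2 - zc n^k) * hBn'
    + (zc n * (zc n - 1) * Bs n n) * hu'
    + (zc n ^ k * Bs n n - (n:ℂ) * gs n k) * hzi')

lemma gm_add_n (hn3 : 3 ≤ n) (k : ℕ) :
    gm n (k + n) = gm n k + Complex.I/4 * n * (zc n - (zc n)⁻¹) := by
  have hn : n ≠ 0 := by omega
  have hz := zc_ne_zero hn
  have h := gm_diff hn3 k
  have h2 : zc n * (Complex.I/4 * n * (zc n - (zc n)⁻¹)) = Complex.I/4 * n * (zc n ^ 2 - 1) := by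
    field_simp
  have h3 : zc n * (gm n (k + n) - gm n k) = zc n * (Complex.I/4 * n * (zc n - (zc n)⁻¹)) := by
    rw [h, h2]
  have h4 := mul_left_cancel₀ hz h3
  linear_combination h4



def pt (n : ℕ) : (Fin n ⊕ Fin n) → ℂ :=
  Sum.elim (fun j => zc n ^ ((j:ℕ):ℤ)) (fun j => zc n ^ (-(j:ℕ):ℤ))

variable [NeZero n]

def Sp (n : ℕ) [NeZero n] (k : ℕ) (j : Fin n) : MvPolynomial (Fin n ⊕ Fin n) ℂ :=
  ∑ m ∈ Finset.range k, Zv n j ^ (k - 1 - m) * Zv n (j + 1) ^ m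

lemma nu_eq (k : ℕ) : nu n k = C (Complex.I / 4) *
    ∑ j : Fin n, (Wv n j - Wv n (j + 1)) * Sp n k j := rfl

lemma eval_Z (j : Fin n) : eval (pt n) (Zv n j) = zc n ^ ((j:ℕ):ℤ) := by
  simp [Zv, pt]

lemma eval_W (j : Fin n) : eval (pt n) (Wv n j) = zc n ^ (-(j:ℕ):ℤ) := by
  simp [Wv, pt]

lemma pderiv_Z_inl (j' j : Fin n) :
    pderiv (Sum.inl j') (Zv n j) = if j = j' then 1 else 0 := by
  rw [Zv, pderiv_X]
  rcases eq_or_ne j j' with rfl | hj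
  · simp
  · simp [Pi.single_apply, hj, (Sum.inl_injective.ne_iff).mpr hj]

lemma pderiv_Z_inr (j' j : Fin n) : pderiv (Sum.inr j') (Zv n j) = 0 := by
  rw [Zv]
  exact pderiv_X_of_ne (by simp)

lemma pderiv_W_inl (j' j : Fin n) : pderiv (Sum.inl j') (Wv n j) = 0 := by
  rw [Wv]
  exact pderiv_X_of_ne (by simp)

lemma pderiv_W_inr (j' j : Fin n) :
    pderiv (Sum.inr j') (Wv n j) = if j = j' then 1 else 0 := by
  rw [Wv, pderiv_X]
  rcases eq_or_ne j j' with rfl | hj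
  · simp
  · simp [Pi.single_apply, hj, (Sum.inr_injective.ne_iff).mpr hj]

lemma pderiv_Sp_inr (k : ℕ) (j' j : Fin n) : pderiv (Sum.inr j') (Sp n k j) = 0 := by
  rw [Sp, map_sum]
  refine Finset.sum_eq_zero fun m _ => ?_
  rw [pderiv_mul, pderiv_pow, pderiv_pow, pderiv_Z_inr, pderiv_Z_inr]
  ring

lemma zpow_pow (a : ℤ) (b : ℕ) : (zc n ^ a) ^ b = zc n ^ (a * b) := by
  rw [← zpow_natCast (zc n ^ a) b, ← zpow_mul]

lemma zc_fin_add_one' (j : Fin n) :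
    zc n ^ ((((j + 1 : Fin n) : ℕ)) : ℤ) = zc n ^ (((j:ℕ):ℤ) + 1) := by
  rw [zpow_fin_add_one (n := n), zpow_add₀ (zc_ne_zero (NeZero.ne n)), zpow_one]

lemma val_add_one_mod (j : Fin n) : ((j + 1 : Fin n) : ℕ) = ((j : ℕ) + 1) % n := by
  have hn : n ≠ 0 := NeZero.ne n
  rcases n with _ | m
  · exact absurd rfl hn
  · rw [Fin.val_add, Fin.val_one']
    conv_rhs => rw [Nat.add_mod]
    rw [Nat.mod_eq_of_lt j.isLt]

lemma val_sub_one_dvd (j : Fin n) :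
    (n:ℤ) ∣ ((((j - 1 : Fin n):ℕ):ℤ) - (((j:ℕ):ℤ) - 1)) := by
  have hn : n ≠ 0 := NeZero.ne n
  have h1 : ((j - 1 : Fin n) + 1 : Fin n) = j := by abel
  have h2 : (j : ℕ) = (((j-1 : Fin n) : ℕ) + 1) % n := by
    conv_lhs => rw [← h1]
    exact val_add_one_mod _
  obtain ⟨c, hc⟩ := mod_dvd hn (((j-1 : Fin n) : ℕ) + 1)
  refine ⟨-c, ?_⟩
  rw [h2]
  push_cast
  push_cast at hc
  linarith

lemma eval_Sp (k : ℕ) (j : Fin n) :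
    eval (pt n) (Sp n k j) = zc n ^ (((j:ℕ):ℤ) * ((k:ℤ) - 1)) * gs n k := by
  have hz := zc_ne_zero (NeZero.ne n)
  rw [Sp, map_sum, gs, Finset.mul_sum]
  refine Finset.sum_congr rfl fun m hm => ?_
  rw [Finset.mem_range] at hm
  rw [map_mul, map_pow, map_pow, eval_Z, eval_Z, zc_fin_add_one', zpow_pow, zpow_pow,
    ← zpow_add₀ hz, ← zpow_natCast (zc n) m, ← zpow_add₀ hz]
  congr 1
  have hcast : ((k - 1 - m : ℕ) : ℤ) = (k:ℤ) - 1 - m := by omega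
  rw [hcast]
  ring

lemma evalW (k : ℕ) (j' : Fin n) :
    eval (pt n) (pderiv (Sum.inr j') (nu n k))
      = dl n k * zc n ^ (((j':ℕ):ℤ) * ((k:ℤ) - 1)) := by
  have hn : n ≠ 0 := NeZero.ne n
  have hz := zc_ne_zero hn
  rw [nu_eq, pderiv_C_mul, map_sum]
  have hterm : ∀ j : Fin n, pderiv (Sum.inr j') ((Wv n j - Wv n (j + 1)) * Sp n k j)
      = ((if j = j' then 1 else 0) - (if j + 1 = j' then 1 else 0)) * Sp n k j := by
    intro j
    rw [pderiv_mul, pderiv_Sp_inr, mul_zero, add_zero, map_sub, pderiv_W_inr, pderiv_W_inr]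
  rw [Finset.sum_congr rfl fun j _ => hterm j, map_mul, eval_C, map_sum]
  have hcond : ∀ j : Fin n, (j + 1 = j') ↔ (j = j' - 1) := fun j =>
    ⟨fun h => by rw [← h]; abel, fun h => by rw [h]; abel⟩
  simp only [map_mul, map_sub, sub_mul, apply_ite (eval (pt n)), map_one, map_zero,
    ite_mul, one_mul, zero_mul]
  rw [Finset.sum_sub_distrib,
    Finset.sum_ite_eq' Finset.univ j' (fun j => eval (pt n) (Sp n k j)),
    Finset.sum_congr rfl fun j _ => if_congr (hcond j) rfl rfl,
    Finset.sum_ite_eq' Finset.univ (j' - 1) (fun j => eval (pt n) (Sp n k j))]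
  simp only [Finset.mem_univ, if_true]
  rw [eval_Sp, eval_Sp]
  have hj0 : zc n ^ ((((j' - 1 : Fin n):ℕ):ℤ) * ((k:ℤ) - 1))
      = zc n ^ (((j':ℕ):ℤ) * ((k:ℤ) - 1)) * zc n ^ (1 - (k:ℤ)) := by
    have hd : (n:ℤ) ∣ (((((j' - 1 : Fin n):ℕ):ℤ) * ((k:ℤ) - 1))
        - ((((j':ℕ):ℤ) - 1) * ((k:ℤ) - 1))) := by
      have := val_sub_one_dvd (n := n) j'
      obtain ⟨c, hc⟩ := this
      exact ⟨c * ((k:ℤ) - 1), by linear_combination ((k:ℤ) - 1) * hc⟩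
    rw [zpow_congr hn hd, ← zpow_add₀ hz]
    congr 1
    ring
  rw [hj0, dl]
  ring


lemma one_ne_zero_fin (hn3 : 3 ≤ n) : (1 : Fin n) ≠ 0 := by
  intro h
  have hval := congrArg Fin.val h
  rcases n with _ | _ | m
  · omega
  · omega
  · simp at hval

lemma evalSd (hn3 : 3 ≤ n) (k : ℕ) (j j' : Fin n) :
    eval (pt n) (pderiv (Sum.inl j') (Sp n k j))
      = (if j = j' then zc n ^ (((j:ℕ):ℤ) * ((k:ℤ)-2)) * As n k else 0)
        + (if j + 1 = j' then zc n ^ (((j:ℕ):ℤ) * ((k:ℤ)-1) - (j:ℕ) - 1) * Bs n k else 0) := by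
  have hn : n ≠ 0 := by omega
  have hz := zc_ne_zero hn
  have hder : ∀ m : ℕ, pderiv (Sum.inl j') (Zv n j ^ (k-1-m) * Zv n (j+1) ^ m)
      = ((k-1-m : ℕ) : MvPolynomial (Fin n ⊕ Fin n) ℂ) * Zv n j ^ (k-1-m-1)
          * (if j = j' then 1 else 0) * Zv n (j+1) ^ m
        + Zv n j ^ (k-1-m)
          * (((m:ℕ) : MvPolynomial (Fin n ⊕ Fin n) ℂ) * Zv n (j+1) ^ (m-1)
          * (if j + 1 = j' then 1 else 0)) := by
    intro m
    rw [pderiv_mul, pderiv_pow, pderiv_pow, pderiv_Z_inl, pderiv_Z_inl]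
    try ring
  rw [Sp, map_sum]
  by_cases h1 : j = j' <;> by_cases h2 : j + 1 = j'
  · exfalso
    have h4 : j + 1 = j + 0 := by rw [add_zero]; exact h2.trans h1.symm
    exact one_ne_zero_fin hn3 (add_left_cancel h4)
  · rw [if_pos h1, if_neg h2, add_zero, map_sum, As, Finset.mul_sum]
    refine Finset.sum_congr rfl fun m hm => ?_
    rw [Finset.mem_range] at hm
    rw [hder m, if_pos h1, if_neg h2]
    simp only [mul_one, mul_zero, add_zero, map_add, map_mul, map_pow, map_natCast, eval_Z]
    by_cases hm1 : m = k - 1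
    · have he : k - 1 - m = 0 := by omega
      have hc : ((k:ℂ) - 1 - (m:ℂ)) = 0 := by
        rw [hm1]
        have : ((k - 1 : ℕ) : ℂ) = (k:ℂ) - 1 := by
          have : (1:ℕ) ≤ k := by omega
          push_cast [this]
          ring
        rw [this]
        ring
      rw [he, hc]
      simp
    · have hcast : ((k - 1 - m : ℕ) : ℂ) = (k:ℂ) - 1 - (m:ℂ) := by
        have h5 : m + 1 ≤ k := by omega
        have h6 : ((k - 1 - m : ℕ) : ℂ) = ((k - (1 + m) : ℕ) : ℂ) := by
          congr 1
          omega
        rw [h6, Nat.cast_sub (by omega)]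
        push_cast
        ring
      have hexp : ((j:ℕ):ℤ) * ((k - 1 - m - 1 : ℕ) : ℤ) + (((j:ℕ):ℤ) + 1) * (m:ℤ)
          = ((j:ℕ):ℤ) * ((k:ℤ) - 2) + (m:ℤ) := by
        have : ((k - 1 - m - 1 : ℕ) : ℤ) = (k:ℤ) - 2 - m := by omega
        rw [this]
        ring
      rw [zc_fin_add_one', zpow_pow, zpow_pow, hcast, mul_assoc, ← zpow_add₀ hz, hexp,
        zpow_add₀ hz, zpow_natCast]
      ring
  · rw [if_neg h1, if_pos h2, zero_add, map_sum, Bs, Finset.mul_sum]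
    refine Finset.sum_congr rfl fun m hm => ?_
    rw [Finset.mem_range] at hm
    rw [hder m, if_neg h1, if_pos h2]
    simp only [mul_one, mul_zero, zero_mul, zero_add, map_add, map_mul, map_pow,
      map_natCast, eval_Z]
    by_cases hm0 : m = 0
    · rw [hm0]
      simp
    · have hexp : ((j:ℕ):ℤ) * ((k - 1 - m : ℕ) : ℤ) + (((j:ℕ):ℤ) + 1) * ((m - 1 : ℕ) : ℤ)
          = (((j:ℕ):ℤ) * ((k:ℤ)-1) - (j:ℕ) - 1) + (m:ℤ) := by
        have e1 : ((k - 1 - m : ℕ) : ℤ) = (k:ℤ) - 1 - m := by omega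
        have e2 : ((m - 1 : ℕ) : ℤ) = (m:ℤ) - 1 := by omega
        rw [e1, e2]
        ring
      rw [zc_fin_add_one', zpow_pow, zpow_pow, mul_left_comm, ← zpow_add₀ hz, hexp,
        zpow_add₀ hz, zpow_natCast]
      ring
  · rw [if_neg h1, if_neg h2, add_zero]
    rw [map_sum]
    refine Finset.sum_eq_zero fun m _ => ?_
    rw [hder m, if_neg h1, if_neg h2]
    simp

lemma evalZ (hn3 : 3 ≤ n) (k : ℕ) (j' : Fin n) :
    eval (pt n) (pderiv (Sum.inl j') (nu n k))
      = gm n k * zc n ^ (((j':ℕ):ℤ) * ((k:ℤ) - 3)) := by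
  have hn : n ≠ 0 := by omega
  have hz := zc_ne_zero hn
  rw [nu_eq, pderiv_C_mul, map_mul, eval_C, map_sum, map_sum]
  have hterm : ∀ j : Fin n,
      eval (pt n) (pderiv (Sum.inl j') ((Wv n j - Wv n (j + 1)) * Sp n k j))
      = (zc n ^ (-((j:ℕ):ℤ)) - zc n ^ (-(((j+1 : Fin n):ℕ):ℤ))) *
          ((if j = j' then zc n ^ (((j:ℕ):ℤ) * ((k:ℤ)-2)) * As n k else 0)
            + (if j + 1 = j' then
                zc n ^ (((j:ℕ):ℤ) * ((k:ℤ)-1) - (j:ℕ) - 1) * Bs n k else 0)) := by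
    intro j
    rw [pderiv_mul, map_sub, pderiv_W_inl, pderiv_W_inl, sub_self, zero_mul, zero_add,
      map_mul, map_sub, eval_W, eval_W, evalSd hn3]
  rw [Finset.sum_congr rfl fun j _ => hterm j]
  have hsplit : ∀ j : Fin n,
      (zc n ^ (-((j:ℕ):ℤ)) - zc n ^ (-(((j+1 : Fin n):ℕ):ℤ))) *
        ((if j = j' then zc n ^ (((j:ℕ):ℤ) * ((k:ℤ)-2)) * As n k else 0)
          + (if j + 1 = j' then zc n ^ (((j:ℕ):ℤ) * ((k:ℤ)-1) - (j:ℕ) - 1) * Bs n k else 0))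
      = (if j = j' then
          (zc n ^ (-((j:ℕ):ℤ)) - zc n ^ (-(((j+1 : Fin n):ℕ):ℤ)))
            * (zc n ^ (((j:ℕ):ℤ) * ((k:ℤ)-2)) * As n k) else 0)
        + (if j = j' - 1 then
          (zc n ^ (-((j:ℕ):ℤ)) - zc n ^ (-(((j+1 : Fin n):ℕ):ℤ)))
            * (zc n ^ (((j:ℕ):ℤ) * ((k:ℤ)-1) - (j:ℕ) - 1) * Bs n k) else 0) := by
    intro j
    have hcond : (j + 1 = j') ↔ (j = j' - 1) :=
      ⟨fun h => by rw [← h]; abel, fun h => by rw [h]; abel⟩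
    rw [mul_add, mul_ite, mul_ite]
    simp only [mul_zero]
    congr 1
    exact if_congr hcond rfl rfl
  rw [Finset.sum_congr rfl fun j _ => hsplit j, Finset.sum_add_distrib,
    Finset.sum_ite_eq' Finset.univ j', Finset.sum_ite_eq' Finset.univ (j' - 1)]
  simp only [Finset.mem_univ, if_true]
  -- now pure complex arithmetic
  have hja : ((j' - 1 : Fin n) + 1 : Fin n) = j' := by abel
  set J : ℤ := ((j':ℕ):ℤ) with hJ
  set j₀ : Fin n := j' - 1 with hj₀
  have e1 : zc n ^ (-(((j'+1 : Fin n):ℕ):ℤ)) = (zc n ^ J)⁻¹ * (zc n)⁻¹ := by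
    rw [zpow_neg, zc_fin_add_one', zpow_add₀ hz, zpow_one, mul_inv]
  have e2 : zc n ^ (-((j':ℕ):ℤ)) = (zc n ^ J)⁻¹ := by rw [zpow_neg]
  have e3 : zc n ^ (-(((j₀ + 1 : Fin n):ℕ):ℤ)) = (zc n ^ J)⁻¹ := by
    rw [hja, zpow_neg]
  have hd0 := val_sub_one_dvd (n := n) j'
  have e4 : zc n ^ (-((j₀:ℕ):ℤ)) = (zc n ^ J)⁻¹ * zc n := by
    have : zc n ^ (-((j₀:ℕ):ℤ)) = zc n ^ (1 - J) := by
      apply zpow_congr hn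
      obtain ⟨c, hc⟩ := hd0
      exact ⟨-c, by linear_combination -hc⟩
    rw [this, zpow_sub₀ hz, zpow_one]
    field_simp
  have e5 : zc n ^ (((j₀:ℕ):ℤ) * ((k:ℤ)-1) - ((j₀:ℕ):ℤ) - 1)
      = zc n ^ (J * ((k:ℤ)-3)) * zc n ^ (J:ℤ) * zc n ^ (1 - (k:ℤ)) := by
    have h1 : zc n ^ (((j₀:ℕ):ℤ) * ((k:ℤ)-1) - ((j₀:ℕ):ℤ) - 1)
        = zc n ^ (J * ((k:ℤ)-3) + J + (1 - (k:ℤ))) := by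
      apply zpow_congr hn
      obtain ⟨c, hc⟩ := hd0
      exact ⟨c * ((k:ℤ) - 2), by linear_combination ((k:ℤ) - 2) * hc⟩
    rw [h1, zpow_add₀ hz, zpow_add₀ hz]
  have e6 : zc n ^ (J * ((k:ℤ)-2)) = zc n ^ (J * ((k:ℤ)-3)) * zc n ^ (J:ℤ) := by
    rw [← zpow_add₀ hz]
    congr 1
    ring
  rw [e1, e2, e3, e4, e5, e6, gm]
  have hxz : zc n ^ J ≠ 0 := zpow_ne_zero _ hz
  field_simp


def aC (n k' : ℕ) : ℂ := if k' < n then gm n (k' + n) else if k' < n + 2 then 0 else 1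

def cC (n k' : ℕ) : ℂ := if k' < n then -(dl n k') else if k' < n + 2 then 1 else 0

def Tm (n N : ℕ) : (Fin n ⊕ Fin n) → Fin N → ℂ := fun x i' =>
  Sum.elim
    (fun j : Fin n => cC n ((i':ℕ)+2) * zc n ^ (-((j:ℕ):ℤ) * (((i':ℕ):ℤ) - 1)) / n)
    (fun j : Fin n => aC n ((i':ℕ)+2) * zc n ^ (-((j:ℕ):ℤ) * (((i':ℕ):ℤ) + 1)) / n) x

lemma entry (hn3 : 3 ≤ n) (N : ℕ) (i i' : Fin N) :
    (∑ x : Fin n ⊕ Fin n, eval (pt n) (pderiv x (nu n ((i:ℕ)+2))) * Tm n N x i')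
      = if (n:ℤ) ∣ (((i:ℕ):ℤ) - ((i':ℕ):ℤ))
        then gm n ((i:ℕ)+2) * cC n ((i':ℕ)+2) + dl n ((i:ℕ)+2) * aC n ((i':ℕ)+2)
        else 0 := by
  have hn : n ≠ 0 := by omega
  have hz := zc_ne_zero hn
  have hnc : (n:ℂ) ≠ 0 := Nat.cast_ne_zero.mpr hn
  rw [Fintype.sum_sum_type]
  have hL : ∀ j : Fin n,
      eval (pt n) (pderiv (Sum.inl j) (nu n ((i:ℕ)+2))) * Tm n N (Sum.inl j) i'
      = gm n ((i:ℕ)+2) * cC n ((i':ℕ)+2) / n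
          * zc n ^ (((j:ℕ):ℤ) * (((i:ℕ):ℤ) - ((i':ℕ):ℤ))) := by
    intro j
    rw [evalZ hn3]
    simp only [Tm, Sum.elim_inl]
    have hm : zc n ^ (((j:ℕ):ℤ) * (((((i:ℕ)+2) :ℕ):ℤ) - 3))
          * zc n ^ (-((j:ℕ):ℤ) * (((i':ℕ):ℤ) - 1))
        = zc n ^ (((j:ℕ):ℤ) * (((i:ℕ):ℤ) - ((i':ℕ):ℤ))) := by
      rw [← zpow_add₀ hz]
      congr 1
      push_cast
      ring
    rw [← hm]
    ring
  have hR : ∀ j : Fin n,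
      eval (pt n) (pderiv (Sum.inr j) (nu n ((i:ℕ)+2))) * Tm n N (Sum.inr j) i'
      = dl n ((i:ℕ)+2) * aC n ((i':ℕ)+2) / n
          * zc n ^ (((j:ℕ):ℤ) * (((i:ℕ):ℤ) - ((i':ℕ):ℤ))) := by
    intro j
    rw [evalW]
    simp only [Tm, Sum.elim_inr]
    have hm : zc n ^ (((j:ℕ):ℤ) * (((((i:ℕ)+2) :ℕ):ℤ) - 1))
          * zc n ^ (-((j:ℕ):ℤ) * (((i':ℕ):ℤ) + 1))
        = zc n ^ (((j:ℕ):ℤ) * (((i:ℕ):ℤ) - ((i':ℕ):ℤ))) := by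
      rw [← zpow_add₀ hz]
      congr 1
      push_cast
      ring
    rw [← hm]
    ring
  rw [Finset.sum_congr rfl fun j _ => hL j, Finset.sum_congr rfl fun j _ => hR j,
    ← Finset.mul_sum, ← Finset.mul_sum, sum_fin_zpow hn]
  split_ifs with h
  · field_simp
    try ring
  · simp

lemma not_dvd_aux (hn3 : 3 ≤ n) {k : ℕ} (h1 : 1 ≤ k) (h2 : k ≤ 2*n - 1) (h3 : ¬ (k = n)) :
    ¬ n ∣ k := by
  intro hd
  obtain ⟨q, hq⟩ := hd
  have hq2 : q ≤ 1 ∨ 2 ≤ q := by omega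
  rcases hq2 with hq2 | hq2
  · have hq3 : q = 0 ∨ q = 1 := by omega
    rcases hq3 with rfl | rfl
    · omega
    · omega
  · have := mul_le_mul_right hq2 n
    omega

theorem statement3' (n : ℕ) [NeZero n] (hn : 3 ≤ n) :
    AlgebraicIndependent ℂ (fun i : Fin (2 * n - 2) => nu n ((i : ℕ) + 2)) := by
  have hnz : n ≠ 0 := by omega
  have hnc : (n:ℂ) ≠ 0 := Nat.cast_ne_zero.mpr hnz
  have hI4 : (Complex.I / 4 : ℂ) ≠ 0 := div_ne_zero Complex.I_ne_zero (by norm_num)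
  have hmu := mu_ne_zero hn
  apply algIndep_of_det_ne_zero _ (pt n) (Tm n (2*n-2))
  have hM : ∀ i i' : Fin (2*n-2),
      (Matrix.of fun i i' : Fin (2*n-2) =>
        ∑ x : Fin n ⊕ Fin n, eval (pt n) (pderiv x (nu n ((i:ℕ)+2))) * Tm n (2*n-2) x i') i i'
      = if (n:ℤ) ∣ (((i:ℕ):ℤ) - ((i':ℕ):ℤ))
        then gm n ((i:ℕ)+2) * cC n ((i':ℕ)+2) + dl n ((i:ℕ)+2) * aC n ((i':ℕ)+2)
        else 0 := fun i i' => entry hn (2*n-2) i i'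
  have htri : (Matrix.of fun i i' : Fin (2*n-2) =>
      ∑ x : Fin n ⊕ Fin n, eval (pt n) (pderiv x (nu n ((i:ℕ)+2))) * Tm n (2*n-2) x i').BlockTriangular id := by
    intro i i' hlt
    rw [hM i i']
    by_cases hd : (n:ℤ) ∣ (((i:ℕ):ℤ) - ((i':ℕ):ℤ))
    · rw [if_pos hd]
      -- difference must be exactly n
      have hlt' : (i':ℕ) < (i:ℕ) := hlt
      have hb1 : (1:ℤ) ≤ ((i:ℕ):ℤ) - ((i':ℕ):ℤ) := by
        have := hlt'
        omega
      have hb2 : ((i:ℕ):ℤ) - ((i':ℕ):ℤ) ≤ 2*(n:ℤ) - 3 := by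
        have h1 : (i:ℕ) < 2*n - 2 := i.isLt
        omega
      have hdn : ((i:ℕ):ℤ) - ((i':ℕ):ℤ) = n := by
        have hge := Int.le_of_dvd (by omega) hd
        rcases eq_or_lt_of_le hge with heq | hlt2
        · omega
        · exfalso
          have hd2 : (n:ℤ) ∣ (((i:ℕ):ℤ) - ((i':ℕ):ℤ) - n) := by
            exact dvd_sub hd dvd_rfl
          have hge2 := Int.le_of_dvd (by omega) hd2
          omega
      have hik : (i:ℕ) = (i':ℕ) + n := by omega
      have hk' : (i':ℕ) + 2 < n := by
        have h1 : (i:ℕ) < 2*n - 2 := i.isLt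
        omega
      rw [hik, aC, cC, if_pos hk', if_pos hk']
      have h5 : (i':ℕ) + n + 2 = ((i':ℕ) + 2) + n := by ring
      rw [h5, dl_add_n (by omega : 2 ≤ n)]
      ring
    · rw [if_neg hd]
  rw [Matrix.det_of_upperTriangular htri]
  apply Finset.prod_ne_zero_iff.mpr
  intro i _
  rw [hM i i, if_pos (by rw [sub_self]; exact dvd_zero _)]
  set k := (i:ℕ) + 2 with hk
  have hk1 : 2 ≤ k := by omega
  have hk2 : k ≤ 2*n - 1 := by
    have := i.isLt
    omega
  by_cases h1 : k < n
  · rw [aC, cC, if_pos h1, if_pos h1, gm_add_n hn]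
    have hdl : dl n k ≠ 0 := by
      apply dl_ne_zero (by omega : 2 ≤ n) (by omega : 1 ≤ k)
      · exact not_dvd_aux hn (by omega) (by omega) (by omega)
      · intro hdd
        obtain ⟨q, hq⟩ := hdd
        have hq2 : q = 0 ∨ 1 ≤ q := by omega
        rcases hq2 with rfl | hq2
        · omega
        · have := Nat.mul_le_mul_left n hq2
          omega
    have : gm n k * -dl n k + dl n k * (gm n k + Complex.I/4 * n * (zc n - (zc n)⁻¹))
        = dl n k * (Complex.I/4 * n * (zc n - (zc n)⁻¹)) := by ring
    rw [this]
    exact mul_ne_zero hdl (mul_ne_zero (mul_ne_zero hI4 hnc) hmu)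
  · by_cases h2 : k < n + 2
    · rw [aC, cC, if_neg h1, if_neg h1, if_pos h2, if_pos h2]
      have hk3 : k = n ∨ k = n + 1 := by omega
      have hval : gm n k * 1 + dl n k * 0 = gm n k := by ring
      rw [hval]
      rcases hk3 with hk3 | hk3 <;> rw [hk3]
      · rw [gm_n hn]
        exact mul_ne_zero (mul_ne_zero hI4 hnc) hmu
      · rw [gm_n1 hn]
        exact mul_ne_zero (mul_ne_zero hI4 hnc) hmu
    · rw [aC, cC, if_neg h1, if_neg h1, if_neg h2, if_neg h2]
      have : gm n k * 0 + dl n k * 1 = dl n k := by ring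
      rw [this]
      apply dl_ne_zero (by omega : 2 ≤ n) (by omega : 1 ≤ k)
      · exact not_dvd_aux hn (by omega) hk2 (by omega)
      · intro hdd
        have := not_dvd_aux hn (k := k - 1) (by omega) (by omega) (by omega) hdd
        exact this

end StatementThree

/-- The `2n−2` polynomials `ν₂, ν₃, …, ν_{2n−1}` are algebraically independent over `ℂ`. -/
theorem statement3 (n : ℕ) [NeZero n] (hn : 3 ≤ n) :
    AlgebraicIndependent ℂ (fun i : Fin (2 * n - 2) => nu n ((i : ℕ) + 2)) :=
  StatementThree.statement3' n hn
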